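/- Divided difference identity: for a parameter t ∈ (0,1) and distinct z₁,…,z_n all with z_j t ≠ 1, the n-point divided difference of f(z) = z^{n−1}(1−zt)^{-1} satisfies f[z₁,…,z_n] = ∏_{j=1}^n (1−z_j t)^{-1}. -/

import Mathlib

/-- Divided difference identity: the `n`-point divided difference of
`f(z) = z^{n−1}(1−zt)⁻¹` at distinct points `z₁,…,z_n` equals `∏_j (1−z_j t)⁻¹`. -/
theorem stmt14 (n : ℕ) (hn : 0 < n) (t : ℝ) (ht : t ∈ Set.Ioo (0 : ℝ) 1)
    (z : Fin n → ℂ) (hz : Function.Injective z) (hzt : ∀ j, z j * t ≠ 1) :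
    ∑ l, (z l ^ (n - 1) * (1 - z l * t)⁻¹) *
        ∏ s ∈ Finset.univ.erase l, (z l - z s)⁻¹ =
      ∏ j, (1 - z j * t)⁻¹ := by
  have ht0 : (t : ℂ) ≠ 0 := by exact_mod_cast ne_of_gt ht.1
  set w : ℂ := (t : ℂ)⁻¹ with hw
  have htw : (t : ℂ) * w = 1 := mul_inv_cancel₀ ht0
  have hwz : ∀ j, w - z j ≠ 0 := by
    intro j h
    apply hzt j
    have : z j = w := by linear_combination -h
    rw [this, hw]; field_simp
  have hfac : ∀ j, (1 : ℂ) - z j * t = t * (w - z j) := by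
    intro j; rw [hw]; field_simp
  have h1 : ∀ j, (1 : ℂ) - z j * t ≠ 0 := fun j =>
    (hfac j) ▸ mul_ne_zero ht0 (hwz j)
  -- interpolation identity
  have hinj : Set.InjOn z (Finset.univ : Finset (Fin n)) := hz.injOn
  have hdeg : (Polynomial.X ^ (n - 1) : Polynomial ℂ).degree
      < (Finset.univ : Finset (Fin n)).card := by
    rw [Polynomial.degree_X_pow, Finset.card_univ, Fintype.card_fin]
    exact_mod_cast Nat.sub_lt hn one_pos
  have key := congrArg (Polynomial.eval w) (Lagrange.eq_interpolate hinj hdeg)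
  simp only [Polynomial.eval_pow, Polynomial.eval_X, Lagrange.interpolate_apply,
    Polynomial.eval_finset_sum, Polynomial.eval_mul, Polynomial.eval_C,
    Lagrange.basis, Polynomial.eval_prod, Lagrange.basisDivisor,
    Polynomial.eval_sub] at key
  have hterm : ∀ l : Fin n,
      (z l ^ (n - 1) * (1 - z l * t)⁻¹) * ∏ s ∈ Finset.univ.erase l, (z l - z s)⁻¹
        = (∏ j, (1 - z j * t)⁻¹) * ((t : ℂ) ^ (n - 1) *
            (z l ^ (n - 1) * ∏ s ∈ Finset.univ.erase l, ((z l - z s)⁻¹ * (w - z s)))) := by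
    intro l
    have hcard : (Finset.univ.erase l).card = n - 1 := by
      rw [Finset.card_erase_of_mem (Finset.mem_univ l), Finset.card_univ, Fintype.card_fin]
    have hprod : ∏ s ∈ Finset.univ.erase l, ((1 - z s * t)⁻¹ * (w - z s))
        = (t : ℂ)⁻¹ ^ (n - 1) := by
      rw [Finset.prod_congr rfl (fun s _ => ?_), Finset.prod_const, hcard]
      rw [hfac s, mul_inv, mul_assoc, inv_mul_cancel₀ (hwz s), mul_one]
    rw [Finset.prod_mul_distrib] at hprod
    have h2 : (∏ s ∈ Finset.univ.erase l, (1 - z s * t)⁻¹)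
        * (∏ s ∈ Finset.univ.erase l, (w - z s)) * (t : ℂ) ^ (n - 1) = 1 := by
      rw [hprod, ← mul_pow, inv_mul_cancel₀ ht0, one_pow]
    rw [← Finset.mul_prod_erase _ _ (Finset.mem_univ l), Finset.prod_mul_distrib]
    linear_combination (-( (1 - z l * t)⁻¹ * z l ^ (n - 1) *
      ∏ s ∈ Finset.univ.erase l, (z l - z s)⁻¹)) * h2
  calc ∑ l, (z l ^ (n - 1) * (1 - z l * t)⁻¹) * ∏ s ∈ Finset.univ.erase l, (z l - z s)⁻¹
      = ∑ l, (∏ j, (1 - z j * t)⁻¹) * ((t : ℂ) ^ (n - 1) *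
          (z l ^ (n - 1) * ∏ s ∈ Finset.univ.erase l, ((z l - z s)⁻¹ * (w - z s)))) :=
        Finset.sum_congr rfl fun l _ => hterm l
    _ = (∏ j, (1 - z j * t)⁻¹) * ((t : ℂ) ^ (n - 1) *
          ∑ l, z l ^ (n - 1) * ∏ s ∈ Finset.univ.erase l, ((z l - z s)⁻¹ * (w - z s))) := by
        rw [← Finset.mul_sum, ← Finset.mul_sum]
    _ = ∏ j, (1 - z j * t)⁻¹ := by
        rw [← key, ← mul_pow, htw, one_pow, mul_one]
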